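/- Let α ∈ (1,2), q_α(θ) = |θ|^α and r_α(θ) = (2 − 2cos θ)^{α/2} = |2 sin(θ/2)|^α on [−π,π]. Then 1 ≤ q_α(θ)/r_α(θ) ≤ π²/4 for all θ ∈ [−π,π] \ {0}, and consequently for every n and every nonzero vector z ∈ ℝⁿ, 1 < zᵀ T_n(q_α) z / (zᵀ T_n(r_α) z) < π²/4. -/
import Mathlib


open MeasureTheory Matrix

/-- For an even function `h`, its `m`-th Fourier coefficient
`ĥ_m = (1/2π)∫_{−π}^{π} h(θ)cos(mθ)dθ` (real form). -/
noncomputable def fcCos (h : ℝ → ℝ) (m : ℤ) : ℝ :=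
  (1 / (2 * Real.pi)) * ∫ θ in (-Real.pi)..Real.pi, h θ * Real.cos (m * θ)

/-- The `n×n` real symmetric Toeplitz matrix generated by an even function `h`. -/
noncomputable def ToepE (n : ℕ) (h : ℝ → ℝ) : Matrix (Fin n) (Fin n) ℝ :=
  Matrix.of fun i j => fcCos h ((i : ℤ) - (j : ℤ))

open Real

section Aux

/-- `(2 − 2cos θ)^{α/2} = (2 sin(θ/2))^α` on `[0, π]`. -/
lemma r_eq (α : ℝ) {θ : ℝ} (h0 : 0 ≤ θ) (hπ : θ ≤ π) :
    (2 - 2 * Real.cos θ) ^ (α / 2) = (2 * Real.sin (θ / 2)) ^ α := by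
  have hs : 0 ≤ Real.sin (θ / 2) :=
    Real.sin_nonneg_of_nonneg_of_le_pi (by linarith) (by linarith [Real.pi_pos])
  have h1 : 2 - 2 * Real.cos θ = (2 * Real.sin (θ / 2)) ^ (2 : ℕ) := by
    have := Real.sin_sq_eq_half_sub (θ / 2)
    ring_nf
    ring_nf at this
    nlinarith [this]
  rw [h1, ← Real.rpow_natCast (2 * Real.sin (θ / 2)) 2, ← Real.rpow_mul (by positivity)]
  norm_num
  ring_nf

/-- Key pointwise strict inequalities for `θ ∈ (0, π]`. -/
lemma key_pt (α : ℝ) (hα : α ∈ Set.Ioo (1:ℝ) 2) {θ : ℝ} (h0 : 0 < θ) (hπ : θ ≤ π) :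
    0 < (2 - 2 * Real.cos θ) ^ (α / 2) ∧
    (2 - 2 * Real.cos θ) ^ (α / 2) < θ ^ α ∧
    θ ^ α < π ^ 2 / 4 * (2 - 2 * Real.cos θ) ^ (α / 2) := by
  obtain ⟨hα1, hα2⟩ := hα
  rw [r_eq α h0.le hπ]
  have hs : 0 < Real.sin (θ / 2) :=
    Real.sin_pos_of_pos_of_lt_pi (by linarith) (by linarith [Real.pi_pos])
  have hlt : 2 * Real.sin (θ / 2) < θ := by
    have := Real.sin_lt (x := θ / 2) (by linarith)
    linarith
  have hjordan : θ ≤ π * Real.sin (θ / 2) := by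
    have := Real.mul_le_sin (x := θ / 2) (by linarith) (by linarith)
    have hpi := Real.pi_pos
    rw [div_mul_eq_mul_div, div_le_iff₀ hpi] at this
    linarith
  refine ⟨Real.rpow_pos_of_pos (by positivity) _, ?_, ?_⟩
  · exact Real.rpow_lt_rpow (by positivity) hlt (by linarith)
  · have h1 : θ ^ α ≤ (π * Real.sin (θ / 2)) ^ α :=
      Real.rpow_le_rpow h0.le hjordan (by linarith)
    have h2 : (π * Real.sin (θ / 2)) ^ α = (π/2) ^ α * (2 * Real.sin (θ/2)) ^ α := by
      rw [← Real.mul_rpow (by positivity) (by positivity)]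
      ring_nf
    have h3 : (π/2) ^ α < (π/2) ^ (2:ℝ) :=
      (Real.rpow_lt_rpow_left_iff (by linarith [Real.pi_gt_three])).2 hα2
    have h4 : (π/2) ^ (2:ℝ) = π ^ 2 / 4 := by
      rw [Real.rpow_two]; ring
    have h5 : (0:ℝ) < (2 * Real.sin (θ/2)) ^ α := Real.rpow_pos_of_pos (by positivity) _
    calc θ ^ α ≤ (π/2) ^ α * (2 * Real.sin (θ/2)) ^ α := by rw [← h2]; exact h1
    _ < π ^ 2 / 4 * (2 * Real.sin (θ/2)) ^ α := by
        rw [← h4]; exact mul_lt_mul_of_pos_right h3 h5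

lemma key_abs (α : ℝ) (hα : α ∈ Set.Ioo (1:ℝ) 2) {θ : ℝ} (hθ : θ ∈ Set.Icc (-π) π)
    (h0 : θ ≠ 0) :
    0 < (2 - 2 * Real.cos θ) ^ (α / 2) ∧
    (2 - 2 * Real.cos θ) ^ (α / 2) < |θ| ^ α ∧
    |θ| ^ α < π ^ 2 / 4 * (2 - 2 * Real.cos θ) ^ (α / 2) := by
  have h1 : Real.cos θ = Real.cos |θ| := (Real.cos_abs θ).symm
  have h2 : 0 < |θ| := abs_pos.2 h0
  have h3 : |θ| ≤ π := abs_le.2 ⟨hθ.1, hθ.2⟩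
  rw [h1]
  exact key_pt α hα h2 h3

/-- The Fejér-type kernel `|∑ z_k e^{ikθ}|²` in real form. -/
noncomputable def Fz (n : ℕ) (z : Fin n → ℝ) (θ : ℝ) : ℝ :=
  (∑ i, z i * Real.cos (i * θ)) ^ 2 + (∑ i, z i * Real.sin (i * θ)) ^ 2

lemma Fz_cont (n : ℕ) (z : Fin n → ℝ) : Continuous (Fz n z) := by
  unfold Fz
  fun_prop

lemma Fz_nonneg (n : ℕ) (z : Fin n → ℝ) (θ : ℝ) : 0 ≤ Fz n z θ := by
  unfold Fz; positivity

lemma sum_cos_eq (n : ℕ) (z : Fin n → ℝ) (θ : ℝ) :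
    ∑ i : Fin n, ∑ j : Fin n, z i * z j * Real.cos ((((i:ℤ) - (j:ℤ)) : ℝ) * θ)
      = Fz n z θ := by
  unfold Fz
  rw [sq, sq, Finset.sum_mul_sum, Finset.sum_mul_sum, ← Finset.sum_add_distrib]
  refine Finset.sum_congr rfl fun i _ => ?_
  rw [← Finset.sum_add_distrib]
  refine Finset.sum_congr rfl fun j _ => ?_
  have : ((((i:ℤ) - (j:ℤ)) : ℝ) * θ) = (i:ℝ) * θ - (j:ℝ) * θ := by push_cast; ring
  rw [this, Real.cos_sub]
  ring

/-- The quadratic form of a Toeplitz matrix as a weighted integral. -/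
lemma quadform (n : ℕ) (h : ℝ → ℝ) (hc : Continuous h) (z : Fin n → ℝ) :
    z ⬝ᵥ (ToepE n h).mulVec z
      = (1 / (2 * Real.pi)) * ∫ θ in (-Real.pi)..Real.pi, h θ * Fz n z θ := by
  unfold ToepE fcCos
  simp only [dotProduct, mulVec, Matrix.of_apply]
  have hint : ∀ (i j : Fin n), IntervalIntegrable
      (fun θ => z i * z j * (h θ * Real.cos ((((i:ℤ) - (j:ℤ)) : ℝ) * θ)))
      volume (-Real.pi) Real.pi := fun i j => (by fun_prop : Continuous
      (fun θ => z i * z j * (h θ * Real.cos ((((i:ℤ) - (j:ℤ)) : ℝ) * θ)))).intervalIntegrable _ _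
  calc ∑ i : Fin n, z i * ∑ j : Fin n, (1 / (2 * Real.pi) *
          ∫ θ in (-Real.pi)..Real.pi, h θ * Real.cos (((((i:ℤ) - (j:ℤ)) : ℤ) : ℝ) * θ)) * z j
      = ∑ i : Fin n, ∑ j : Fin n, (1 / (2 * Real.pi)) *
          ∫ θ in (-Real.pi)..Real.pi,
            z i * z j * (h θ * Real.cos ((((i:ℤ) - (j:ℤ)) : ℝ) * θ)) := by
        refine Finset.sum_congr rfl fun i _ => ?_
        rw [Finset.mul_sum]
        refine Finset.sum_congr rfl fun j _ => ?_
        rw [intervalIntegral.integral_const_mul]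
        push_cast
        ring
    _ = (1 / (2 * Real.pi)) * ∑ i : Fin n, ∑ j : Fin n,
          ∫ θ in (-Real.pi)..Real.pi,
            z i * z j * (h θ * Real.cos ((((i:ℤ) - (j:ℤ)) : ℝ) * θ)) := by
        rw [Finset.mul_sum]
        exact Finset.sum_congr rfl fun i _ => (Finset.mul_sum _ _ _).symm
    _ = (1 / (2 * Real.pi)) * ∫ θ in (-Real.pi)..Real.pi, ∑ i : Fin n, ∑ j : Fin n,
            z i * z j * (h θ * Real.cos ((((i:ℤ) - (j:ℤ)) : ℝ) * θ)) := by
        have hsum : ∀ i : Fin n, IntervalIntegrable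
            (fun θ => ∑ j : Fin n, z i * z j * (h θ * Real.cos ((((i:ℤ) - (j:ℤ)) : ℝ) * θ)))
            volume (-Real.pi) Real.pi := fun i =>
          (by fun_prop : Continuous (fun θ => ∑ j : Fin n,
            z i * z j * (h θ * Real.cos ((((i:ℤ) - (j:ℤ)) : ℝ) * θ)))).intervalIntegrable _ _
        rw [intervalIntegral.integral_finset_sum (fun i (_ : i ∈ Finset.univ) => hsum i)]
        congr 1
        exact Finset.sum_congr rfl fun i _ =>
          (intervalIntegral.integral_finset_sum fun j _ => hint i j).symm
    _ = (1 / (2 * Real.pi)) * ∫ θ in (-Real.pi)..Real.pi, h θ * Fz n z θ := by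
        congr 1
        refine intervalIntegral.integral_congr fun θ _ => ?_
        rw [← sum_cos_eq n z θ, Finset.mul_sum]
        refine Finset.sum_congr rfl fun i _ => ?_
        rw [Finset.mul_sum]
        exact Finset.sum_congr rfl fun j _ => by ring

/-- The zero set of `Fz` in `(0, π)` is finite when `z ≠ 0`. -/
lemma zeros_finite (n : ℕ) (z : Fin n → ℝ) (hz : z ≠ 0) :
    {θ ∈ Set.Ioo (0:ℝ) π | Fz n z θ = 0}.Finite := by
  classical
  set p : Polynomial ℂ := ∑ i : Fin n, Polynomial.C (z i : ℂ) * Polynomial.X ^ (i : ℕ) with hp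
  have hpne : p ≠ 0 := by
    obtain ⟨k, hk⟩ := Function.ne_iff.1 hz
    intro h0
    apply hk
    have : p.coeff k = (z k : ℂ) := by
      rw [hp, Polynomial.finset_sum_coeff]
      simp only [Polynomial.coeff_C_mul, Polynomial.coeff_X_pow, mul_ite, mul_one, mul_zero]
      simp [eq_comm (a := (k:ℕ)), Fin.val_inj]
    rw [h0] at this
    simp only [Polynomial.coeff_zero] at this
    exact_mod_cast this.symm
  set e : ℝ → ℂ := fun θ => Complex.exp (θ * Complex.I) with he
  have heval : ∀ θ : ℝ, p.eval (e θ) = (∑ i : Fin n, z i * Real.cos (i * θ) : ℝ) +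
      (∑ i : Fin n, z i * Real.sin (i * θ) : ℝ) * Complex.I := by
    intro θ
    rw [hp, Polynomial.eval_finset_sum]
    have hterm : ∀ i : Fin n, Polynomial.eval (e θ) (Polynomial.C (z i : ℂ) * Polynomial.X ^ (i : ℕ))
        = ((z i * Real.cos (i * θ) : ℝ) : ℂ) + ((z i * Real.sin (i * θ) : ℝ) : ℂ) * Complex.I := by
      intro i
      rw [Polynomial.eval_mul, Polynomial.eval_C, Polynomial.eval_pow, Polynomial.eval_X, he]
      rw [← Complex.exp_nat_mul]
      have h1 : (i : ℂ) * ((θ : ℂ) * Complex.I) = ((i * θ : ℝ) : ℂ) * Complex.I := by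
        push_cast; ring
      rw [h1, Complex.exp_mul_I]
      rw [← Complex.ofReal_cos, ← Complex.ofReal_sin]
      push_cast
      ring
    rw [Finset.sum_congr rfl fun i _ => hterm i, Finset.sum_add_distrib, ← Finset.sum_mul]
    push_cast
    ring
  have hsub : {θ ∈ Set.Ioo (0:ℝ) π | Fz n z θ = 0} ⊆
      {θ ∈ Set.Ioo (0:ℝ) π | p.eval (e θ) = 0} := by
    rintro θ ⟨hθ, hF⟩
    refine ⟨hθ, ?_⟩
    unfold Fz at hF
    have h1 : (∑ i : Fin n, z i * Real.cos (i * θ)) = 0 := by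
      nlinarith [sq_nonneg (∑ i : Fin n, z i * Real.cos (i * θ)),
        sq_nonneg (∑ i : Fin n, z i * Real.sin (i * θ))]
    have h2 : (∑ i : Fin n, z i * Real.sin (i * θ)) = 0 := by
      nlinarith [sq_nonneg (∑ i : Fin n, z i * Real.cos (i * θ)),
        sq_nonneg (∑ i : Fin n, z i * Real.sin (i * θ))]
    rw [heval θ, h1, h2]
    simp
  refine Set.Finite.subset ?_ hsub
  have hinj : Set.InjOn e {θ ∈ Set.Ioo (0:ℝ) π | p.eval (e θ) = 0} := by
    rintro a ⟨ha, _⟩ b ⟨hb, _⟩ hab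
    rw [he] at hab
    obtain ⟨m, hm⟩ := Complex.exp_eq_exp_iff_exists_int.1 hab
    have him := congrArg Complex.im hm
    simp [Complex.add_im, Complex.mul_im] at him
    have hπ := Real.pi_pos
    have hm0 : m = 0 := by
      have h1 : (-1 : ℝ) < (m : ℝ) := by nlinarith [ha.1, ha.2, hb.1, hb.2]
      have h2 : ((m : ℝ)) < 1 := by nlinarith [ha.1, ha.2, hb.1, hb.2]
      have h1' : (-1 : ℤ) < m := by exact_mod_cast h1
      have h2' : m < 1 := by exact_mod_cast h2
      omega
    rw [hm0] at him
    simpa using him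
  have himg : e '' {θ ∈ Set.Ioo (0:ℝ) π | p.eval (e θ) = 0} ⊆ (p.roots.toFinset : Set ℂ) := by
    rintro x ⟨θ, ⟨_, hev⟩, rfl⟩
    simp only [Finset.coe_sort_coe, Multiset.mem_toFinset, Finset.mem_coe]
    exact Polynomial.mem_roots'.2 ⟨hpne, hev⟩
  exact Set.Finite.of_finite_image
    (Set.Finite.subset (p.roots.toFinset : Finset ℂ).finite_toSet himg) hinj

/-- Positivity of an interval integral of a nonnegative continuous function positive
off a finite set of `(0, π)`. -/
lemma ipos (g : ℝ → ℝ) (hc : Continuous g) (hnn : ∀ θ ∈ Set.Icc (-π) π, 0 ≤ g θ)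
    (Z : Set ℝ) (hZ : Z.Finite) (hpos : ∀ θ ∈ Set.Ioo 0 π, θ ∉ Z → 0 < g θ) :
    0 < ∫ θ in (-π)..π, g θ := by
  have hπ := Real.pi_pos
  rw [intervalIntegral.integral_of_le (by linarith)]
  have hInt : IntegrableOn g (Set.Ioc (-π) π) volume :=
    hc.integrableOn_Ioc
  have hnn' : 0 ≤ᵐ[volume.restrict (Set.Ioc (-π) π)] g := by
    refine (ae_restrict_iff' measurableSet_Ioc).2 (Filter.Eventually.of_forall fun θ hθ => ?_)
    exact hnn θ ⟨hθ.1.le, hθ.2⟩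
  have hmono : (∫ θ in Set.Ioo (0:ℝ) π, g θ) ≤ ∫ θ in Set.Ioc (-π) π, g θ := by
    refine setIntegral_mono_set hInt hnn' ?_
    exact HasSubset.Subset.eventuallyLE (fun θ hθ => ⟨by linarith [hθ.1], hθ.2.le⟩)
  refine lt_of_lt_of_le ?_ hmono
  rw [setIntegral_pos_iff_support_of_nonneg_ae]
  · have hsub : Set.Ioo (0:ℝ) π \ Z ⊆ Function.support g ∩ Set.Ioo (0:ℝ) π := by
      rintro θ ⟨hθ, hθZ⟩
      exact ⟨(hpos θ hθ hθZ).ne', hθ⟩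
    calc (0:ENNReal) < volume (Set.Ioo (0:ℝ) π) := by
          rw [Real.volume_Ioo]; simp [hπ]
      _ = volume (Set.Ioo (0:ℝ) π \ Z) := (measure_diff_null (hZ.measure_zero _)).symm
      _ ≤ volume (Function.support g ∩ Set.Ioo (0:ℝ) π) := measure_mono hsub
  · refine (ae_restrict_iff' measurableSet_Ioo).2 (Filter.Eventually.of_forall fun θ hθ => ?_)
    exact hnn θ ⟨by linarith [hθ.1], hθ.2.le⟩
  · exact hc.integrableOn_Ioc.mono_set Set.Ioo_subset_Ioc_self

end Aux

/-- With `q_α(θ) = |θ|^α` and `r_α(θ) = (2 − 2cos θ)^{α/2}` for `α ∈ (1,2)`: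
`1 ≤ q_α/r_α ≤ π²/4` on `[−π,π] \ {0}`, and consequently for every `n` and every
nonzero `z ∈ ℝⁿ`, `1 < zᵀT_n(q_α)z / zᵀT_n(r_α)z < π²/4`. -/
theorem stmt16 (α : ℝ) (hα : α ∈ Set.Ioo (1 : ℝ) 2) :
    (∀ θ ∈ Set.Icc (-Real.pi) Real.pi, θ ≠ 0 →
        1 ≤ |θ| ^ α / (2 - 2 * Real.cos θ) ^ (α / 2) ∧
          |θ| ^ α / (2 - 2 * Real.cos θ) ^ (α / 2) ≤ Real.pi ^ 2 / 4) ∧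
      ∀ n : ℕ, ∀ z : Fin n → ℝ, z ≠ 0 →
        1 < (z ⬝ᵥ (ToepE n fun θ => |θ| ^ α).mulVec z) /
              (z ⬝ᵥ (ToepE n fun θ => (2 - 2 * Real.cos θ) ^ (α / 2)).mulVec z) ∧
          (z ⬝ᵥ (ToepE n fun θ => |θ| ^ α).mulVec z) /
              (z ⬝ᵥ (ToepE n fun θ => (2 - 2 * Real.cos θ) ^ (α / 2)).mulVec z) <
            Real.pi ^ 2 / 4 := by
  have hπ := Real.pi_pos
  constructor
  · intro θ hθ h0
    obtain ⟨hr, hlt, hgt⟩ := key_abs α hα hθ h0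
    exact ⟨(one_le_div hr).2 hlt.le, (div_le_iff₀ hr).2 (by linarith)⟩
  · intro n z hz
    have hα1 := hα.1
    have hα2 := hα.2
    have hcq : Continuous fun θ : ℝ => |θ| ^ α :=
      continuous_abs.rpow_const fun x => Or.inr (by linarith)
    have hcr : Continuous fun θ : ℝ => (2 - 2 * Real.cos θ) ^ (α / 2) :=
      (by fun_prop : Continuous fun θ : ℝ => 2 - 2 * Real.cos θ).rpow_const
        fun x => Or.inr (by linarith)
    rw [quadform n _ hcq z, quadform n _ hcr z]
    have hc : (0:ℝ) < 1 / (2 * π) := by positivity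
    have hZ := zeros_finite n z hz
    set Z := {θ ∈ Set.Ioo (0:ℝ) π | Fz n z θ = 0} with hZdef
    have hFpos : ∀ θ ∈ Set.Ioo (0:ℝ) π, θ ∉ Z → 0 < Fz n z θ := by
      intro θ hθ hθZ
      rcases (Fz_nonneg n z θ).lt_or_eq with h | h
      · exact h
      · exact absurd ⟨hθ, h.symm⟩ hθZ
    -- quantities
    have hq0 : |(0:ℝ)| ^ α = 0 := by
      rw [abs_zero, Real.zero_rpow (by linarith)]
    have hr0 : (2 - 2 * Real.cos (0:ℝ)) ^ (α / 2) = 0 := by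
      rw [Real.cos_zero]
      norm_num
      exact Real.zero_rpow (by linarith)
    -- denominator positive
    have hD : 0 < ∫ θ in (-π)..π, (2 - 2 * Real.cos θ) ^ (α / 2) * Fz n z θ := by
      refine ipos _ (hcr.mul (Fz_cont n z)) (fun θ hθ => ?_) Z hZ (fun θ hθ hθZ => ?_)
      · exact mul_nonneg (Real.rpow_nonneg (by nlinarith [Real.cos_le_one θ]) _)
          (Fz_nonneg n z θ)
      · exact mul_pos (key_pt α hα hθ.1 hθ.2.le).1 (hFpos θ hθ hθZ)
    -- difference q - r positive
    have hQR : 0 < ∫ θ in (-π)..π,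
        (|θ| ^ α - (2 - 2 * Real.cos θ) ^ (α / 2)) * Fz n z θ := by
      refine ipos _ ((hcq.sub hcr).mul (Fz_cont n z)) (fun θ hθ => ?_) Z hZ
        (fun θ hθ hθZ => ?_)
      · rcases eq_or_ne θ 0 with rfl | h0
        · rw [hq0, hr0]; ring_nf; exact le_refl 0
        · exact mul_nonneg (by linarith [(key_abs α hα hθ h0).2.1]) (Fz_nonneg n z θ)
      · have hk := key_pt α hα hθ.1 hθ.2.le
        have : 0 < θ ^ α - (2 - 2 * Real.cos θ) ^ (α / 2) := by linarith [hk.2.1]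
        have habs : |θ| = θ := abs_of_pos hθ.1
        exact mul_pos (by rw [habs]; linarith) (hFpos θ hθ hθZ)
    -- difference π²/4 r - q positive
    have hRQ : 0 < ∫ θ in (-π)..π,
        (π ^ 2 / 4 * (2 - 2 * Real.cos θ) ^ (α / 2) - |θ| ^ α) * Fz n z θ := by
      refine ipos _ (((continuous_const.mul hcr).sub hcq).mul (Fz_cont n z))
        (fun θ hθ => ?_) Z hZ (fun θ hθ hθZ => ?_)
      · rcases eq_or_ne θ 0 with rfl | h0
        · rw [hq0, hr0]; ring_nf; exact le_refl 0
        · exact mul_nonneg (by linarith [(key_abs α hα hθ h0).2.2]) (Fz_nonneg n z θ)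
      · have hk := key_pt α hα hθ.1 hθ.2.le
        have habs : |θ| = θ := abs_of_pos hθ.1
        exact mul_pos (by rw [habs]; linarith [hk.2.2]) (hFpos θ hθ hθZ)
    -- integrability
    have hiq : IntervalIntegrable (fun θ => |θ| ^ α * Fz n z θ) volume (-π) π :=
      (hcq.mul (Fz_cont n z)).intervalIntegrable _ _
    have hir : IntervalIntegrable (fun θ => (2 - 2 * Real.cos θ) ^ (α / 2) * Fz n z θ)
        volume (-π) π := (hcr.mul (Fz_cont n z)).intervalIntegrable _ _
    set A := ∫ θ in (-π)..π, |θ| ^ α * Fz n z θ with hA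
    set B := ∫ θ in (-π)..π, (2 - 2 * Real.cos θ) ^ (α / 2) * Fz n z θ with hB
    have hsub1 : A - B = ∫ θ in (-π)..π,
        (|θ| ^ α - (2 - 2 * Real.cos θ) ^ (α / 2)) * Fz n z θ := by
      rw [hA, hB, ← intervalIntegral.integral_sub hiq hir]
      refine intervalIntegral.integral_congr fun θ _ => ?_
      ring
    have hsub2 : π ^ 2 / 4 * B - A = ∫ θ in (-π)..π,
        (π ^ 2 / 4 * (2 - 2 * Real.cos θ) ^ (α / 2) - |θ| ^ α) * Fz n z θ := by
      rw [hA, hB, ← intervalIntegral.integral_const_mul,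
        ← intervalIntegral.integral_sub (hir.const_mul _) hiq]
      refine intervalIntegral.integral_congr fun θ _ => ?_
      ring
    have hBA : B < A := by rw [← sub_pos, hsub1]; exact hQR
    have hAB : A < π ^ 2 / 4 * B := by
      have := hRQ
      rw [← hsub2] at this
      linarith
    rw [mul_div_mul_left _ _ (ne_of_gt hc)]
    exact ⟨(one_lt_div hD).2 hBA, (div_lt_iff₀ hD).2 (by linarith)⟩
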